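/- Let X be a topological group with multiplication m : X × X → X. Then the fundamental groupoid π₁X is a group-groupoid: the induced functor π₁m : π₁(X × X) ≅ π₁X × π₁X → π₁X makes the morphism set of π₁X a group (via [a] + [b] = [m ∘ (a,b)]) for which source, target, identity and composition are group homomorphisms, and the interchange law ([b] ∘ [a]) + ([d] ∘ [c]) = ([b] + [d]) ∘ ([a] + [c]) holds. -/

import Mathlib

/-- A groupoid, given algebraically: a set of objects `O` and a set of morphisms `M`
with source, target, identity-assigning, (totalized) composition and inversion maps.
`comp b a` is the composite `b ∘ a`, only constrained when `src b = tgt a`. -/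
structure Gpd (O M : Type) where
  src : M → O
  tgt : M → O
  idm : O → M
  comp : M → M → M
  inv : M → M
  src_idm : ∀ x, src (idm x) = x
  tgt_idm : ∀ x, tgt (idm x) = x
  src_comp : ∀ b a, src b = tgt a → src (comp b a) = src a
  tgt_comp : ∀ b a, src b = tgt a → tgt (comp b a) = tgt b
  comp_assoc : ∀ c b a, src c = tgt b → src b = tgt a →
    comp c (comp b a) = comp (comp c b) a
  comp_idm : ∀ a, comp a (idm (src a)) = a
  idm_comp : ∀ a, comp (idm (tgt a)) a = a
  src_inv : ∀ a, src (inv a) = tgt a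
  tgt_inv : ∀ a, tgt (inv a) = src a
  inv_comp : ∀ a, comp (inv a) a = idm (src a)
  comp_inv : ∀ a, comp a (inv a) = idm (tgt a)

/-- A group-groupoid (a group object in groupoids): the objects and morphisms are
groups (written additively, not necessarily commutative) and the structure maps
are group homomorphisms; the interchange law holds. -/
structure GroupGpd (O M : Type) [AddGroup O] [AddGroup M] extends Gpd O M where
  src_add : ∀ a b, src (a + b) = src a + src b
  tgt_add : ∀ a b, tgt (a + b) = tgt a + tgt b
  idm_add : ∀ x y, idm (x + y) = idm x + idm y
  interchange : ∀ a b c d, src b = tgt a → src d = tgt c →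
    comp b a + comp d c = comp (b + d) (a + c)

/-- A morphism of group-groupoids: a functor between the underlying groupoids that is
a group homomorphism on morphisms and on objects. -/
structure GGHom {O M O' M' : Type} [AddGroup O] [AddGroup M] [AddGroup O'] [AddGroup M']
    (S : GroupGpd O M) (T : GroupGpd O' M') where
  f : M → M'
  f0 : O → O'
  map_src : ∀ a, T.src (f a) = f0 (S.src a)
  map_tgt : ∀ a, T.tgt (f a) = f0 (S.tgt a)
  map_idm : ∀ x, f (S.idm x) = T.idm (f0 x)
  map_comp : ∀ b a, S.src b = S.tgt a → f (S.comp b a) = T.comp (f b) (f a)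
  map_add : ∀ a b, f (a + b) = f a + f b
  map_add0 : ∀ x y, f0 (x + y) = f0 x + f0 y

/-- `p : H → G` is a covering morphism if it restricts to a bijection on each star. -/
def GGHom.IsCovering {O M O' M' : Type} [AddGroup O] [AddGroup M] [AddGroup O'] [AddGroup M']
    {S : GroupGpd O M} {T : GroupGpd O' M'} (p : GGHom S T) : Prop :=
  ∀ x : O, Set.BijOn p.f {a | S.src a = x} {b | T.src b = p.f0 x}

/-- Pointwise sum of two paths in a topological additive group. -/
def pathAdd {X : Type} [TopologicalSpace X] [Add X] [ContinuousAdd X]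
    {x y x' y' : X} (a : Path x y) (b : Path x' y') : Path (x + x') (y + y') where
  toFun t := a t + b t
  continuous_toFun := by fun_prop
  source' := by simp
  target' := by simp

section Stmt13Aux

set_option linter.unusedSectionVars false

attribute [local instance] Path.Homotopic.setoid

variable {X : Type} [AddGroup X] [TopologicalSpace X] [IsTopologicalAddGroup X]

abbrev MM (X : Type) [TopologicalSpace X] := Σ x y : X, Path.Homotopic.Quotient x y

noncomputable def addM (σ τ : MM X) : MM X :=
  ⟨σ.1 + τ.1, σ.2.1 + τ.2.1,
    Path.Homotopic.Quotient.map (Path.Homotopic.prod σ.2.2 τ.2.2)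
      ⟨fun z => z.1 + z.2, by fun_prop⟩⟩

noncomputable def negM (σ : MM X) : MM X :=
  ⟨-σ.1, -σ.2.1, Path.Homotopic.Quotient.map σ.2.2 ⟨Neg.neg, continuous_neg⟩⟩

theorem sigma_eq {x y x' y' : X} (a : Path x y) (b : Path x' y')
    (h : ∀ t, a t = b t) :
    (⟨x, y, ⟦a⟧⟩ : MM X) = ⟨x', y', ⟦b⟧⟩ := by
  obtain rfl : x = x' := by rw [← a.source, ← b.source]; exact h 0
  obtain rfl : y = y' := by rw [← a.target, ← b.target]; exact h 1
  have : a = b := Path.ext (funext h)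
  rw [this]

theorem add_lift {x y x' y' : X} (a : Path x y) (b : Path x' y') :
    addM (⟨x, y, ⟦a⟧⟩ : MM X) ⟨x', y', ⟦b⟧⟩ = ⟨x + x', y + y', ⟦pathAdd a b⟧⟩ := by
  unfold addM
  exact congrArg (fun p => (⟨x + x', y + y', ⟦p⟧⟩ : MM X)) (Path.ext rfl)

theorem neg_lift {x y : X} (a : Path x y) :
    negM (⟨x, y, ⟦a⟧⟩ : MM X) = ⟨-x, -y, ⟦a.map continuous_neg⟧⟩ := by
  unfold negM
  rfl

open Classical in
noncomputable def compM (b a : MM X) : MM X :=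
  if h : b.1 = a.2.1 then ⟨a.1, b.2.1, Path.Homotopic.Quotient.trans a.2.2 (h ▸ b.2.2)⟩
  else b

theorem comp_spec {x y z : X} (c₁ : Path.Homotopic.Quotient x y)
    (c₂ : Path.Homotopic.Quotient y z) :
    compM (⟨y, z, c₂⟩ : MM X) ⟨x, y, c₁⟩ = ⟨x, z, c₁.trans c₂⟩ := by
  unfold compM
  rw [dif_pos rfl]

theorem q_comp_lift {x y z : X} (a : Path x y) (b : Path y z) :
    Path.Homotopic.Quotient.trans (⟦a⟧ : Path.Homotopic.Quotient x y) ⟦b⟧ = ⟦a.trans b⟧ :=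
  rfl

theorem q_assoc {w x y z : X} (p : Path.Homotopic.Quotient w x)
    (q : Path.Homotopic.Quotient x y) (r : Path.Homotopic.Quotient y z) :
    p.trans (q.trans r) = (p.trans q).trans r := by
  induction p using Quotient.inductionOn with
  | h a =>
  induction q using Quotient.inductionOn with
  | h b =>
  induction r using Quotient.inductionOn with
  | h c =>
  simp only [q_comp_lift]
  exact Quotient.sound ⟨(Path.Homotopy.transAssoc a b c).symm⟩

theorem q_refl_comp {x y : X} (p : Path.Homotopic.Quotient x y) :
    Path.Homotopic.Quotient.trans (⟦Path.refl x⟧ : Path.Homotopic.Quotient x x) p = p := by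
  induction p using Quotient.inductionOn with
  | h a =>
  rw [q_comp_lift]
  exact Quotient.sound ⟨Path.Homotopy.reflTrans a⟩

theorem q_comp_refl {x y : X} (p : Path.Homotopic.Quotient x y) :
    p.trans (⟦Path.refl y⟧ : Path.Homotopic.Quotient y y) = p := by
  induction p using Quotient.inductionOn with
  | h a =>
  rw [q_comp_lift]
  exact Quotient.sound ⟨Path.Homotopy.transRefl a⟩

noncomputable def invQ {x y : X} (p : Path.Homotopic.Quotient x y) :
    Path.Homotopic.Quotient y x :=
  Quotient.map Path.symm (fun _ _ h => by obtain ⟨h'⟩ := h; exact ⟨h'.symm₂⟩) p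

theorem q_comp_inv {x y : X} (p : Path.Homotopic.Quotient x y) :
    p.trans (invQ p) = ⟦Path.refl x⟧ := by
  induction p using Quotient.inductionOn
  erw [invQ, Quotient.map_mk, q_comp_lift]
  exact Quotient.sound ⟨(Path.Homotopy.reflTransSymm _).symm⟩

theorem q_inv_comp {x y : X} (p : Path.Homotopic.Quotient x y) :
    (invQ p).trans p = ⟦Path.refl y⟧ := by
  induction p using Quotient.inductionOn
  erw [invQ, Quotient.map_mk, q_comp_lift]
  exact Quotient.sound ⟨(Path.Homotopy.reflSymmTrans _).symm⟩

end Stmt13Aux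

section Stmt13Main

attribute [local instance] Path.Homotopic.setoid

variable (X : Type) [AddGroup X] [TopologicalSpace X] [IsTopologicalAddGroup X]

theorem addM_assoc (σ τ ρ : MM X) : addM (addM σ τ) ρ = addM σ (addM τ ρ) := by
  obtain ⟨x, y, p⟩ := σ; obtain ⟨x', y', q⟩ := τ; obtain ⟨x'', y'', r⟩ := ρ
  induction p using Quotient.inductionOn with
  | h a =>
  induction q using Quotient.inductionOn with
  | h b =>
  induction r using Quotient.inductionOn with
  | h c =>
  rw [add_lift, add_lift, add_lift, add_lift]
  exact sigma_eq _ _ fun t => add_assoc (a t) (b t) (c t)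

theorem addM_zero_add (σ : MM X) : addM ⟨0, 0, ⟦Path.refl 0⟧⟩ σ = σ := by
  obtain ⟨x, y, p⟩ := σ
  induction p using Quotient.inductionOn with
  | h a =>
  rw [add_lift]
  exact sigma_eq _ _ fun t => zero_add (a t)

theorem addM_add_zero (σ : MM X) : addM σ ⟨0, 0, ⟦Path.refl 0⟧⟩ = σ := by
  obtain ⟨x, y, p⟩ := σ
  induction p using Quotient.inductionOn with
  | h a =>
  rw [add_lift]
  exact sigma_eq _ _ fun t => add_zero (a t)

theorem addM_neg_add (σ : MM X) : addM (negM σ) σ = ⟨0, 0, ⟦Path.refl 0⟧⟩ := by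
  obtain ⟨x, y, p⟩ := σ
  induction p using Quotient.inductionOn with
  | h a =>
  rw [neg_lift, add_lift]
  exact sigma_eq _ _ fun t => neg_add_cancel (a t)

noncomputable instance instAddMM : Add (MM X) := ⟨addM⟩
noncomputable instance instZeroMM : Zero (MM X) := ⟨⟨0, 0, ⟦Path.refl 0⟧⟩⟩
noncomputable instance instNegMM : Neg (MM X) := ⟨negM⟩

noncomputable def iMX : AddGroup (MM X) :=
  AddGroup.ofLeftAxioms (addM_assoc X) (addM_zero_add X) (addM_neg_add X)

attribute [local instance] iMX

noncomputable def SX : GroupGpd X (MM X) where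
  src σ := σ.1
  tgt σ := σ.2.1
  idm x := ⟨x, x, ⟦Path.refl x⟧⟩
  comp := compM
  inv σ := ⟨σ.2.1, σ.1, invQ σ.2.2⟩
  src_idm _ := rfl
  tgt_idm _ := rfl
  src_comp := by
    rintro ⟨yb, zb, q⟩ ⟨xa, ya, p⟩ h
    dsimp at h; subst h
    rw [comp_spec]
  tgt_comp := by
    rintro ⟨yb, zb, q⟩ ⟨xa, ya, p⟩ h
    dsimp at h; subst h
    rw [comp_spec]
  comp_assoc := by
    rintro ⟨zc, wc, r⟩ ⟨yb, zb, q⟩ ⟨xa, ya, p⟩ h1 h2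
    dsimp at h1 h2; subst h1; subst h2
    rw [comp_spec, comp_spec, comp_spec, comp_spec]
    exact congrArg (fun t => (⟨xa, wc, t⟩ : MM X)) (q_assoc p q r).symm
  comp_idm := by
    rintro ⟨x, y, p⟩
    show compM _ ⟨x, x, ⟦Path.refl x⟧⟩ = _
    erw [comp_spec, q_refl_comp]
  idm_comp := by
    rintro ⟨x, y, p⟩
    show compM ⟨y, y, ⟦Path.refl y⟧⟩ _ = _
    erw [comp_spec, q_comp_refl]
  src_inv _ := rfl
  tgt_inv _ := rfl
  inv_comp := by
    rintro ⟨x, y, p⟩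
    show compM ⟨y, x, invQ p⟩ ⟨x, y, p⟩ = _
    rw [comp_spec, q_comp_inv]
  comp_inv := by
    rintro ⟨x, y, p⟩
    show compM ⟨x, y, p⟩ ⟨y, x, invQ p⟩ = _
    rw [comp_spec, q_inv_comp]
  src_add _ _ := rfl
  tgt_add _ _ := rfl
  idm_add := by
    intro x y
    show _ = addM ⟨x, x, ⟦Path.refl x⟧⟩ ⟨y, y, ⟦Path.refl y⟧⟩
    rw [add_lift]
    exact sigma_eq _ _ fun _ => rfl
  interchange := by
    rintro ⟨xa, ya, p⟩ ⟨yb, zb, q⟩ ⟨xc, yc, r⟩ ⟨yd, zd, s⟩ h1 h2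
    dsimp at h1 h2; subst h1; subst h2
    induction p using Quotient.inductionOn with
    | h a =>
    induction q using Quotient.inductionOn with
    | h b =>
    induction r using Quotient.inductionOn with
    | h c =>
    induction s using Quotient.inductionOn with
    | h d =>
    show addM (compM _ _) (compM _ _) = compM (addM _ _) (addM _ _)
    erw [comp_spec, comp_spec, q_comp_lift, q_comp_lift, add_lift, add_lift, add_lift,
      comp_spec, q_comp_lift]
    refine sigma_eq _ _ fun t => ?_
    show (a.trans b) t + (c.trans d) t = ((pathAdd a c).trans (pathAdd b d)) t
    rw [Path.trans_apply, Path.trans_apply, Path.trans_apply]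
    split_ifs <;> rfl

end Stmt13Main

/-- Let `X` be a topological group (written additively, with
continuous addition `m`). Then the fundamental groupoid `π₁X` is a group-groupoid:
its morphism set `Σ x y, Path.Homotopic.Quotient x y` carries a group structure,
induced by `π₁m` on path classes by pointwise addition (`[a] + [b] = [m ∘ (a,b)]`),
giving a group-groupoid whose source, target, identities and composition are those
of the fundamental groupoid (in particular these are group homomorphisms and the
interchange law holds, since these are the `GroupGpd` axioms). -/
theorem stmt13 (X : Type) [AddGroup X] [TopologicalSpace X] [IsTopologicalAddGroup X] :
    ∃ (iM : AddGroup (Σ x y : X, Path.Homotopic.Quotient x y))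
      (S : @GroupGpd X (Σ x y : X, Path.Homotopic.Quotient x y) _ iM),
      S.src = (fun σ => σ.1) ∧
      S.tgt = (fun σ => σ.2.1) ∧
      S.idm = (fun x => ⟨x, x, ⟦Path.refl x⟧⟩) ∧
      (∀ (x y z : X) (c₁ : Path.Homotopic.Quotient x y) (c₂ : Path.Homotopic.Quotient y z),
        S.comp ⟨y, z, c₂⟩ ⟨x, y, c₁⟩ = ⟨x, z, c₁.trans c₂⟩) ∧
      (∀ (x y x' y' : X) (a : Path x y) (b : Path x' y'),
        iM.add ⟨x, y, ⟦a⟧⟩ ⟨x', y', ⟦b⟧⟩ = ⟨x + x', y + y', ⟦pathAdd a b⟧⟩) := by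
  exact ⟨iMX X, SX X, rfl, rfl, rfl, fun x y z c₁ c₂ => comp_spec c₁ c₂,
    fun x y x' y' a b => add_lift a b⟩
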